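/- Let p be a prime, G cyclic of order p, and M a finite Z_p[G]-module annihilated by the algebraic norm ν = 1 + σ + ... + σ^{p-1}. Then the p-rank of M satisfies rk_p(M) ≤ (p-1)·rk_p(M^G), where rk_p denotes dim over F_p of M/M^p and M^G is the submodule of G-fixed points. -/
import Mathlib


open scoped TensorProduct

/-- The `p`-rank of an additive abelian group: `dim_{𝔽_p} (M / pM)`,
realized as `dim_{𝔽_p} (𝔽_p ⊗_ℤ M)`. -/
noncomputable def pRankAdd (p : ℕ) (M : Type*) [AddCommGroup M] : ℕ :=
  Module.finrank (ZMod p) ((ZMod p) ⊗[ℤ] M)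

/-- `𝔽_p ⊗_ℤ A` is, as a type, equivalent to `A ⧸ pA`. -/
noncomputable def tensorZModEquiv (p : ℕ) (A : Type*) [AddCommGroup A] :
    (ZMod p ⊗[ℤ] A) ≃ (A ⧸ (Ideal.span {(p : ℤ)} • (⊤ : Submodule ℤ A))) :=
  ((TensorProduct.congr ((Int.quotientSpanNatEquivZMod p).symm.toAddEquiv.toIntLinearEquiv)
      (LinearEquiv.refl ℤ A)).trans
    (TensorProduct.quotTensorEquivQuotSMul A (Ideal.span {(p : ℤ)}))).toEquiv

lemma card_tensor_zmod (p : ℕ) (A : Type*) [AddCommGroup A] :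
    Nat.card (ZMod p ⊗[ℤ] A)
      = Nat.card (A ⧸ (Ideal.span {(p : ℤ)} • (⊤ : Submodule ℤ A))) :=
  Nat.card_congr (tensorZModEquiv p A)

lemma pow_pRankAdd (p : ℕ) [Fact p.Prime] (A : Type*) [AddCommGroup A] [Finite A] :
    p ^ (Module.finrank (ZMod p) ((ZMod p) ⊗[ℤ] A)) = Nat.card (ZMod p ⊗[ℤ] A) := by
  have h0 : Finite (A ⧸ (Ideal.span {(p : ℤ)} • (⊤ : Submodule ℤ A))) :=
    Quotient.finite _
  have h1 : Finite (ZMod p ⊗[ℤ] A) := Finite.of_equiv _ (tensorZModEquiv p A).symm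
  have h2 := Fintype.ofFinite (ZMod p ⊗[ℤ] A)
  rw [Nat.card_eq_fintype_card, Module.card_eq_pow_finrank (K := ZMod p), ZMod.card]

section CardLemmas

variable {R : Type*} [Ring R] {M : Type*} [AddCommGroup M] [Module R M]
  {N : Type*} [AddCommGroup N] [Module R N] [Finite M]

lemma card_ker_mul_card_range (f : M →ₗ[R] N) :
    Nat.card (LinearMap.ker f) * Nat.card (LinearMap.range f) = Nat.card M := by
  rw [Submodule.card_eq_card_quotient_mul_card (LinearMap.ker f),
    Nat.card_congr f.quotKerEquivRange.toEquiv]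

lemma card_quotient_range (f : M →ₗ[R] M) :
    Nat.card (M ⧸ LinearMap.range f) = Nat.card (LinearMap.ker f) := by
  have h1 := Submodule.card_eq_card_quotient_mul_card (LinearMap.range f)
  have h2 := card_ker_mul_card_range f
  have hpos : 0 < Nat.card (LinearMap.range f) := Nat.card_pos
  have h3 : Nat.card (M ⧸ LinearMap.range f) * Nat.card (LinearMap.range f)
      = Nat.card (LinearMap.ker f) * Nat.card (LinearMap.range f) := by
    rw [h2, mul_comm (Nat.card (M ⧸ LinearMap.range f)), ← h1]
  exact Nat.eq_of_mul_eq_mul_right hpos h3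

lemma card_ker_pow_le (f : M →ₗ[R] M) (k : ℕ) :
    Nat.card (LinearMap.ker (f ^ k)) ≤ Nat.card (LinearMap.ker f) ^ k := by
  induction k with
  | zero =>
    rw [pow_zero, pow_zero]
    have : LinearMap.ker ((1 : M →ₗ[R] M)) = ⊥ := LinearMap.ker_id
    rw [this]
    simp [Nat.card_eq_one_iff_unique]
  | succ n ih =>
    have hmem : ∀ x ∈ LinearMap.ker (f ^ (n + 1)), (f ^ n) x ∈ LinearMap.ker f := by
      intro x hx
      rw [LinearMap.mem_ker] at hx ⊢
      rw [← Module.End.mul_apply, ← pow_succ' f n]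
      exact hx
    set g : LinearMap.ker (f ^ (n + 1)) →ₗ[R] LinearMap.ker f := (f ^ n).restrict hmem with hg
    have h1 := card_ker_mul_card_range g
    have h2 : Nat.card (LinearMap.range g) ≤ Nat.card (LinearMap.ker f) :=
      Nat.card_le_card_of_injective _ Subtype.val_injective
    have h3 : Nat.card (LinearMap.ker g) ≤ Nat.card (LinearMap.ker (f ^ n)) := by
      let F : LinearMap.ker g → LinearMap.ker (f ^ n) := fun x =>
        ⟨((x : LinearMap.ker (f ^ (n + 1))) : M), by
          have hx := x.2
          rw [LinearMap.mem_ker] at hx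
          rw [LinearMap.mem_ker]
          have h0 : ((g (x : LinearMap.ker (f ^ (n + 1)))) : M) = 0 := by rw [hx]; rfl
          exact h0⟩
      have hinj : Function.Injective F := by
        intro a b hab
        exact Subtype.ext (Subtype.ext (congrArg (Subtype.val : LinearMap.ker (f ^ n) → M) hab))
      exact Nat.card_le_card_of_injective F hinj
    calc Nat.card (LinearMap.ker (f ^ (n + 1)))
        = Nat.card (LinearMap.ker g) * Nat.card (LinearMap.range g) := h1.symm
      _ ≤ Nat.card (LinearMap.ker (f ^ n)) * Nat.card (LinearMap.ker f) :=
          Nat.mul_le_mul h3 h2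
      _ ≤ Nat.card (LinearMap.ker f) ^ n * Nat.card (LinearMap.ker f) :=
          Nat.mul_le_mul_right _ ih
      _ = Nat.card (LinearMap.ker f) ^ (n + 1) := (pow_succ _ _).symm

end CardLemmas

open Polynomial in
lemma geom_eq_binom_shift (p : ℕ) :
    (∑ i ∈ Finset.range p, (X : ℤ[X]) ^ i)
      = ∑ k ∈ Finset.range p, ((p.choose (k + 1) : ℤ[X]) * (X - 1) ^ k) := by
  have hX : (X - 1 : ℤ[X]) ≠ 0 := by
    simpa using X_sub_C_ne_zero (1 : ℤ)
  apply mul_left_cancel₀ hX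
  rw [mul_geom_sum]
  rw [Finset.mul_sum]
  have hb : ((X : ℤ[X]) ^ p)
      = ∑ k ∈ Finset.range (p + 1), (X - 1) ^ k * (p.choose k : ℤ[X]) := by
    have h := add_pow (X - 1 : ℤ[X]) 1 p
    simpa using h
  rw [hb, Finset.sum_range_succ']
  simp only [Nat.choose_zero_right, Nat.cast_one, pow_zero, one_mul, mul_one,
    add_sub_cancel_right]
  apply Finset.sum_congr rfl
  intro k _
  ring

/-- Let `p` be a prime, `G = ⟨σ⟩` cyclic of order `p`, and `M` a finite
`ℤ_[p][G]`-module annihilated by the algebraic norm `ν = 1 + σ + ⋯ + σ^{p-1}`.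
Then `rk_p(M) ≤ (p-1) · rk_p(M^G)`, where `M^G = ker (1 - σ)` is the submodule of
`G`-fixed points. -/
theorem pRank_le_of_norm_annihilates {p : ℕ} [Fact p.Prime] {M : Type*} [AddCommGroup M]
    [Module ℤ_[p] M] [Finite M] (σ : Module.End ℤ_[p] M)
    (hσ : σ ^ p = 1) (hν : ∑ i ∈ Finset.range p, σ ^ i = 0) :
    pRankAdd p M ≤ (p - 1) * pRankAdd p ↥(LinearMap.ker (1 - σ)) := by
  show Module.finrank (ZMod p) ((ZMod p) ⊗[ℤ] M)
      ≤ (p - 1) * Module.finrank (ZMod p) ((ZMod p) ⊗[ℤ] ↥(LinearMap.ker (1 - σ)))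
  classical
  have hp : p.Prime := Fact.out
  obtain ⟨q, hq⟩ : ∃ q, p = q + 1 := ⟨p - 1, (Nat.succ_pred_eq_of_pos hp.pos).symm⟩
  -- move everything to `ℤ`-linear endomorphisms
  let φ : Module.End ℤ_[p] M →+* Module.End ℤ M :=
    { toFun := fun f => f.restrictScalars ℤ
      map_one' := rfl
      map_mul' := fun _ _ => rfl
      map_zero' := rfl
      map_add' := fun _ _ => rfl }
  set s : Module.End ℤ M := φ σ with hs
  set t : Module.End ℤ M := s - 1 with ht
  have hν' : ∑ i ∈ Finset.range p, s ^ i = 0 := by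
    have h := congrArg φ hν
    simpa [map_sum, map_pow] using h
  -- the key identity `∑_{k<p} C(p,k+1) t^k = 0`
  have hkey : ∑ k ∈ Finset.range p, ((p.choose (k + 1) : Module.End ℤ M)) * t ^ k = 0 := by
    have h := congrArg (Polynomial.aeval s) (geom_eq_binom_shift p)
    simp only [map_sum, map_pow, map_mul, Polynomial.aeval_X, map_sub, map_one,
      map_natCast] at h
    rw [← ht] at h
    exact h.symm.trans hν'
  have happ : ∀ x : M, ∑ k ∈ Finset.range p, (p.choose (k + 1)) • (t ^ k) x = 0 := by
    intro x
    have h := congrFun (congrArg DFunLike.coe hkey) x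
    simpa [Module.End.mul_apply, Module.End.natCast_apply] using h
  -- fixed points are killed by `p`
  have hker : ∀ x : M, t x = 0 → p • x = 0 := by
    intro x hx
    have h := happ x
    rw [Finset.sum_eq_single 0 (fun k _ hk0 => by
      obtain ⟨m, rfl⟩ := Nat.exists_eq_succ_of_ne_zero hk0
      rw [pow_succ, Module.End.mul_apply, hx, map_zero, smul_zero])
      (fun h0 => absurd (Finset.mem_range.mpr hp.pos) h0)] at h
    simpa using h
  -- the image of `t ^ q` is contained in `p M`
  have hrange : ∀ x : M, ∃ y : M, (t ^ q) x = p • y := by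
    intro x
    have h0 := happ x
    have h : (∑ k ∈ Finset.range q, p.choose (k + 1) • (t ^ k) x)
        + p.choose (q + 1) • (t ^ q) x = 0 := by
      rw [← Finset.sum_range_succ, ← hq]; exact h0
    have hc : p.choose (q + 1) = 1 := by rw [← hq, Nat.choose_self]
    rw [hc, one_smul] at h
    refine ⟨-(∑ k ∈ Finset.range q, (p.choose (k + 1) / p) • (t ^ k) x), ?_⟩
    have h2 : (t ^ q) x = -(∑ k ∈ Finset.range q, (p.choose (k + 1)) • (t ^ k) x) :=
      eq_neg_of_add_eq_zero_right h
    rw [h2, smul_neg, Finset.smul_sum]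
    congr 1
    refine Finset.sum_congr rfl fun k hk => ?_
    rw [smul_smul]
    congr 1
    exact (Nat.mul_div_cancel' (hp.dvd_choose_self (Nat.succ_ne_zero k)
      (by have := Finset.mem_range.mp hk; omega))).symm
  -- counting
  set I : Ideal ℤ := Ideal.span {(p : ℤ)} with hI
  set S : Submodule ℤ M := LinearMap.range (t ^ q) with hS
  have hSle : S ≤ I • (⊤ : Submodule ℤ M) := by
    rintro _ ⟨x, rfl⟩
    obtain ⟨y, hy⟩ := hrange x
    rw [hy, ← Nat.cast_smul_eq_nsmul ℤ]
    exact Submodule.smul_mem_smul (Ideal.subset_span rfl) trivial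
  have hquot_le : Nat.card (M ⧸ I • (⊤ : Submodule ℤ M)) ≤ Nat.card (M ⧸ S) := by
    have hfin : Finite (M ⧸ S) := Quotient.finite _
    have hle : S ≤ (I • (⊤ : Submodule ℤ M)).comap LinearMap.id := hSle
    refine Nat.card_le_card_of_surjective (Submodule.mapQ S (I • ⊤) LinearMap.id hle) ?_
    intro y
    obtain ⟨x, rfl⟩ := Submodule.Quotient.mk_surjective _ y
    exact ⟨Submodule.Quotient.mk x, by simp [Submodule.mapQ_apply]⟩
  -- the fixed-point module
  set K : Submodule ℤ_[p] M := LinearMap.ker (1 - σ) with hK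
  have hKt : ∀ x : M, x ∈ K ↔ t x = 0 := by
    intro x
    have h0 : t x = σ x - x := rfl
    rw [hK, LinearMap.mem_ker, h0]
    constructor
    · intro h
      have h1 : x - σ x = 0 := by simpa using h
      rw [sub_eq_zero] at h1
      rw [sub_eq_zero]
      exact h1.symm
    · intro h
      rw [sub_eq_zero] at h
      simp [LinearMap.sub_apply, h]
  have hcard_ker : Nat.card K = Nat.card (LinearMap.ker t) :=
    Nat.card_congr (Equiv.subtypeEquivRight (fun x =>
      (hKt x).trans LinearMap.mem_ker.symm))
  -- `p` kills `K`, so `I • ⊤ = ⊥` in `K`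
  have hIK : I • (⊤ : Submodule ℤ ↥K) = ⊥ := by
    apply le_bot_iff.mp
    rw [Submodule.smul_le]
    intro r hr n _
    obtain ⟨c, hc⟩ := Ideal.mem_span_singleton'.mp hr
    have hn : ((p : ℤ) • n : ↥K) = 0 := by
      apply Subtype.ext
      have h1 : (((p : ℤ) • n : ↥K) : M) = (p : ℤ) • (n : M) := rfl
      rw [h1, Nat.cast_smul_eq_nsmul]
      exact hker _ ((hKt _).mp n.2)
    rw [← hc, mul_smul, hn, smul_zero]
    exact Submodule.zero_mem ⊥
  -- assemble
  have hcard_M : p ^ Module.finrank (ZMod p) ((ZMod p) ⊗[ℤ] M)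
      = Nat.card (M ⧸ I • (⊤ : Submodule ℤ M)) := by
    rw [pow_pRankAdd p M, card_tensor_zmod p M]
  have hcard_K : p ^ Module.finrank (ZMod p) ((ZMod p) ⊗[ℤ] ↥K) = Nat.card ↥K := by
    rw [pow_pRankAdd p ↥K, card_tensor_zmod p ↥K, hIK,
      Nat.card_congr (Submodule.quotEquivOfEqBot (⊥ : Submodule ℤ ↥K) rfl).toEquiv]
  have hmain : p ^ Module.finrank (ZMod p) ((ZMod p) ⊗[ℤ] M)
      ≤ p ^ ((p - 1) * Module.finrank (ZMod p) ((ZMod p) ⊗[ℤ] ↥K)) := by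
    rw [hcard_M]
    calc Nat.card (M ⧸ I • (⊤ : Submodule ℤ M)) ≤ Nat.card (M ⧸ S) := hquot_le
      _ = Nat.card (LinearMap.ker (t ^ q)) := card_quotient_range _
      _ ≤ Nat.card (LinearMap.ker t) ^ q := card_ker_pow_le t q
      _ = (Nat.card ↥K) ^ q := by rw [hcard_ker]
      _ = p ^ ((p - 1) * Module.finrank (ZMod p) ((ZMod p) ⊗[ℤ] ↥K)) := by
          rw [← hcard_K, ← pow_mul]
          congr 1
          have hq1 : p - 1 = q := by omega
          rw [hq1, mul_comm]
  exact (Nat.pow_le_pow_iff_right hp.one_lt).mp hmain
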